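/- The set function A ↦ HVI(A | P, r) = HV(A ∪ P | r) − HV(P | r), defined on finite subsets A of R^M, is a normalized, monotone, submodular set function: HVI(∅ | P) = 0; A ⊆ B implies HVI(A | P) ≤ HVI(B | P); and for all A ⊆ B and y ∈ R^M, HVI(A ∪ {y} | P) − HVI(A | P) ≥ HVI(B ∪ {y} | P) − HVI(B | P). -/
import Mathlib


open MeasureTheory
open scoped Classical symmDiff

/-- Hypervolume dominated by a finite set `S` of points, bounded below by reference point `r`:
the Lebesgue measure of the union of the boxes `[r, v]` for `v ∈ S`. -/
noncomputable def HV {M : ℕ} (S : Finset (Fin M → ℝ)) (r : Fin M → ℝ) : ℝ :=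
  (volume (⋃ v ∈ S, Set.Icc r v)).toReal

/-- Hypervolume improvement of a finite set `A` with respect to a finite set `P`
and reference point `r`. -/
noncomputable def HVI {M : ℕ} (A P : Finset (Fin M → ℝ)) (r : Fin M → ℝ) : ℝ :=
  HV (A ∪ P) r - HV P r

lemma U_measurable {M : ℕ} (S : Finset (Fin M → ℝ)) (r : Fin M → ℝ) :
    MeasurableSet (⋃ v ∈ S, Set.Icc r v) :=
  S.measurableSet_biUnion (fun _ _ => measurableSet_Icc)

lemma U_finite {M : ℕ} (S : Finset (Fin M → ℝ)) (r : Fin M → ℝ) :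
    volume (⋃ v ∈ S, Set.Icc r v) ≠ ⊤ := by
  refine ne_top_of_le_ne_top ?_ (measure_biUnion_finset_le S _)
  exact (ENNReal.sum_lt_top.2 fun v _ => isCompact_Icc.measure_lt_top).ne

lemma U_mono {M : ℕ} {S T : Finset (Fin M → ℝ)} (h : S ⊆ T) (r : Fin M → ℝ) :
    (⋃ v ∈ S, Set.Icc r v) ⊆ ⋃ v ∈ T, Set.Icc r v :=
  Set.biUnion_subset_biUnion_left (by exact_mod_cast h)

lemma HV_insert {M : ℕ} (y : Fin M → ℝ) (S : Finset (Fin M → ℝ)) (r : Fin M → ℝ) :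
    HV (insert y S) r =
      HV S r + (volume (Set.Icc r y \ ⋃ v ∈ S, Set.Icc r v)).toReal := by
  unfold HV
  have h1 : (⋃ v ∈ insert y S, Set.Icc r v) =
      (⋃ v ∈ S, Set.Icc r v) ∪ (Set.Icc r y \ ⋃ v ∈ S, Set.Icc r v) := by
    rw [Finset.set_biUnion_insert]
    rw [Set.union_diff_self]
    exact Set.union_comm _ _
  rw [h1, measure_union disjoint_sdiff_self_right
    ((measurableSet_Icc).diff (U_measurable S r)),
    ENNReal.toReal_add (U_finite S r)
      (ne_top_of_le_ne_top (U_finite (insert y S) r)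
        (measure_mono (by
          intro x hx
          rcases hx with ⟨hx1, _⟩
          exact Set.mem_biUnion (Finset.mem_insert_self y S) hx1)))]

/-- The hypervolume improvement is a normalized, monotone, submodular set function. -/
theorem hvi_normalized_monotone_submodular {M : ℕ} (P : Finset (Fin M → ℝ))
    (r : Fin M → ℝ) :
    HVI ∅ P r = 0 ∧
    (∀ A B : Finset (Fin M → ℝ), A ⊆ B → HVI A P r ≤ HVI B P r) ∧
    (∀ A B : Finset (Fin M → ℝ), A ⊆ B → ∀ y : Fin M → ℝ,
      HVI (insert y B) P r - HVI B P r ≤ HVI (insert y A) P r - HVI A P r) := by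
  refine ⟨by simp [HVI], fun A B h => ?_, fun A B h y => ?_⟩
  · unfold HVI HV
    have := measure_mono (μ := volume) (U_mono (Finset.union_subset_union_left (t := P) h) r)
    exact sub_le_sub_right
      ((ENNReal.toReal_le_toReal (U_finite _ r) (U_finite _ r)).mpr this) _
  · have key : ∀ C : Finset (Fin M → ℝ),
        HVI (insert y C) P r - HVI C P r =
          (volume (Set.Icc r y \ ⋃ v ∈ C ∪ P, Set.Icc r v)).toReal := by
      intro C
      have : insert y C ∪ P = insert y (C ∪ P) := by
        ext x; simp [or_assoc]
      simp only [HVI, this, HV_insert]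
      ring
    rw [key A, key B]
    refine ENNReal.toReal_le_toReal ?_ ?_ |>.mpr
      (measure_mono (Set.diff_subset_diff_right
        (U_mono (Finset.union_subset_union_left (t := P) h) r)))
    all_goals
      exact ne_top_of_le_ne_top ((isCompact_Icc : IsCompact (Set.Icc r y)).measure_lt_top).ne
        (measure_mono Set.diff_subset)
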